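/- Let K be a union-closed family on a finite set Q with ∅ ∈ K, and X ⊆ Q. Then there exists a tight path from ∅ to X in K if and only if for every member S ∈ K that is a proper subset of X, there exists x ∈ X \ S with S ∪ {x} ∈ K. -/
import Mathlib


variable {α : Type*} [DecidableEq α] [Fintype α]

/-- A family of subsets is union-closed. -/
def UnionClosed (K : Set (Finset α)) : Prop :=
  ∀ X ∈ K, ∀ Y ∈ K, X ∪ Y ∈ K

/-- There is a tight path in `K` from `S` to `T`: a chain of members of `K`
each obtained from the previous by adding exactly one element. -/
def TightPath (K : Set (Finset α)) (S T : Finset α) : Prop :=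
  ∃ (k : ℕ) (Y : ℕ → Finset α), Y 0 = S ∧ Y k = T ∧ (∀ i ≤ k, Y i ∈ K) ∧
    ∀ i < k, Y i ⊆ Y (i + 1) ∧ (Y (i + 1) \ Y i).card = 1

/-- The family of members of `K` reachable from `∅` by a tight path in `K`. -/
def checkFam (K : Set (Finset α)) : Set (Finset α) :=
  {X | X ∈ K ∧ TightPath K ∅ X}

/-- Accessibility: every nonempty member can lose some element and stay in the family. -/
def Accessible (K : Set (Finset α)) : Prop :=
  ∀ X ∈ K, X ≠ ∅ → ∃ x ∈ X, X.erase x ∈ K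

/-- An antimatroid: contains `∅`, union-closed, and accessible. -/
def IsAntimatroid (K : Set (Finset α)) : Prop :=
  ∅ ∈ K ∧ UnionClosed K ∧ Accessible K

theorem stmt4 (K : Set (Finset α)) (hempty : ∅ ∈ K) (hU : UnionClosed K) (X : Finset α) :
    TightPath K ∅ X ↔
      ∀ S ∈ K, S ⊂ X → ∃ x ∈ X \ S, insert x S ∈ K := by
  constructor
  · rintro ⟨k, Y, h0, hk, hmem, hstep⟩ S hS hSX
    -- monotonicity of the chain
    have hmono : ∀ i j, i ≤ j → j ≤ k → Y i ⊆ Y j := by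
      intro i j hij hjk
      induction j with
      | zero => simpa [Nat.le_zero.mp hij]
      | succ m ih =>
        rcases Nat.lt_or_ge i (m+1) with h | h
        · exact (ih (Nat.lt_succ_iff.mp h) (le_trans (Nat.le_succ m) hjk)).trans
            (hstep m (Nat.lt_of_succ_le hjk)).1
        · have : i = m + 1 := le_antisymm hij h
          simp [this]
    have hex : ∃ i, ¬ Y i ⊆ S := ⟨k, by rw [hk]; exact fun h => hSX.2 h⟩
    classical
    have hnspec : ¬ Y (Nat.find hex) ⊆ S := Nat.find_spec hex
    have hn0 : Nat.find hex ≠ 0 := by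
      intro h
      apply hnspec
      rw [h, h0]; exact Finset.empty_subset S
    obtain ⟨m, hm⟩ := Nat.exists_eq_succ_of_ne_zero hn0
    rw [hm] at hnspec
    have hmS : Y m ⊆ S := by
      by_contra h
      have : Nat.find hex ≤ m := Nat.find_le h
      omega
    have hmk : m + 1 ≤ k := by
      by_contra h
      have hkm : k < Nat.find hex := by omega
      have h2 := Nat.find_min hex hkm
      rw [not_not] at h2
      exact hSX.2 (hk ▸ h2)
    obtain ⟨hsub, hcard⟩ := hstep m (by omega)
    obtain ⟨x, hxeq⟩ := Finset.card_eq_one.mp hcard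
    have hxmem : x ∈ Y (m+1) \ Y m := by rw [hxeq]; exact Finset.mem_singleton_self x
    obtain ⟨hx1, hx2⟩ := Finset.mem_sdiff.mp hxmem
    have hxS : x ∉ S := by
      intro hxs
      apply hnspec
      intro a ha
      by_cases hay : a ∈ Y m
      · exact hmS hay
      · have : a ∈ Y (m+1) \ Y m := Finset.mem_sdiff.mpr ⟨ha, hay⟩
        rw [hxeq, Finset.mem_singleton] at this
        rw [this]; exact hxs
    have hxX : x ∈ X := hk ▸ hmono (m+1) k hmk (le_refl k) hx1
    refine ⟨x, Finset.mem_sdiff.mpr ⟨hxX, hxS⟩, ?_⟩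
    have hun : S ∪ Y (m+1) ∈ K := hU S hS _ (hmem (m+1) hmk)
    have : S ∪ Y (m+1) = insert x S := by
      ext a
      simp only [Finset.mem_union, Finset.mem_insert]
      constructor
      · rintro (h' | h')
        · exact Or.inr h'
        · by_cases hay : a ∈ Y m
          · exact Or.inr (hmS hay)
          · have : a ∈ Y (m+1) \ Y m := Finset.mem_sdiff.mpr ⟨h', hay⟩
            rw [hxeq, Finset.mem_singleton] at this
            exact Or.inl this
      · rintro (rfl | h')
        · exact Or.inr hx1
        · exact Or.inl h'
    rwa [this] at hun
  · intro h
    have key : ∀ n (S : Finset α), S ∈ K → S ⊆ X → (X \ S).card = n → TightPath K S X := by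
      intro n
      induction n with
      | zero =>
        intro S hS hSX hc
        have h1 : X \ S = ∅ := Finset.card_eq_zero.mp hc
        have hXS : X ⊆ S := Finset.sdiff_eq_empty_iff_subset.mp h1
        have : S = X := le_antisymm hSX hXS
        subst this
        exact ⟨0, fun _ => S, rfl, rfl, fun i _ => hS, fun i hi => absurd hi (Nat.not_lt_zero i)⟩
      | succ n ih =>
        intro S hS hSX hc
        have hne : S ≠ X := by
          intro h'
          subst h'
          simp at hc
        obtain ⟨x, hx, hins⟩ := h S hS ⟨hSX, fun h' => hne (le_antisymm hSX h')⟩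
        obtain ⟨hxX, hxS⟩ := Finset.mem_sdiff.mp hx
        have hsub : insert x S ⊆ X := Finset.insert_subset hxX hSX
        have hcard : (X \ insert x S).card = n := by
          have : X \ insert x S = (X \ S).erase x := by
            ext a; simp [Finset.mem_sdiff, Finset.mem_erase]; tauto
          rw [this, Finset.card_erase_of_mem hx, hc]
          rfl
        obtain ⟨k, Y, h0, hk, hmem, hstep⟩ := ih (insert x S) hins hsub hcard
        refine ⟨k + 1, fun i => match i with | 0 => S | Nat.succ j => Y j, rfl, hk, ?_, ?_⟩
        · intro i hi
          match i with
          | 0 => exact hS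
          | Nat.succ j => exact hmem j (Nat.succ_le_succ_iff.mp hi)
        · intro i hi
          match i with
          | 0 =>
            constructor
            · simpa [h0] using Finset.subset_insert x S
            · have hs : insert x S \ S = {x} := by
                ext a
                simp only [Finset.mem_sdiff, Finset.mem_insert, Finset.mem_singleton]
                constructor
                · rintro ⟨h1 | h1, h2⟩
                  · exact h1
                  · exact absurd h1 h2
                · rintro rfl
                  exact ⟨Or.inl rfl, hxS⟩
              show (Y 0 \ S).card = 1
              rw [h0, hs]
              rfl
          | Nat.succ j => exact hstep j (Nat.succ_lt_succ_iff.mp hi)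
    obtain h' := key (X \ ∅).card ∅ hempty (Finset.empty_subset X) rfl
    exact h'
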